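/- arXiv:2303.09903 — 2 statements merged into one kernel-verified Lean document; each statement's English description precedes it below -/
import Mathlib

section
/- Let H be a connected k-uniform hypergraph with n ≥ 2 vertices and m hyperedges, and let χ be its strong chromatic number. Then q_max(H) ≥ (km/n)·(1 + 1/(χ-1)). -/
open Finset

/-- The set of hyperedges containing both `i` and `j`. -/
def edgesBetween {n : ℕ} (E : Finset (Finset (Fin n))) (i j : Fin n) :
    Finset (Finset (Fin n)) :=
  E.filter fun e => i ∈ e ∧ j ∈ e

/-- The degree of vertex `i`: the number of hyperedges containing `i`. -/
def hdeg {n : ℕ} (E : Finset (Finset (Fin n))) (i : Fin n) : ℕ :=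
  (E.filter fun e => i ∈ e).card

/-- Two (distinct) vertices are adjacent if some hyperedge contains both. -/
def Adj {n : ℕ} (E : Finset (Finset (Fin n))) (i j : Fin n) : Prop :=
  i ≠ j ∧ ∃ e ∈ E, i ∈ e ∧ j ∈ e

/-- The neighbours of a vertex. -/
noncomputable def neighbors {n : ℕ} (E : Finset (Finset (Fin n))) (i : Fin n) :
    Finset (Fin n) :=
  @Finset.filter _ (fun j => Adj E i j) (Classical.decPred _) Finset.univ

/-- Banerjee's adjacency matrix of a hypergraph: `A i j = ∑_{e ∋ i,j} 1/(|e|-1)`. -/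
noncomputable def adjMat {n : ℕ} (E : Finset (Finset (Fin n))) :
    Matrix (Fin n) (Fin n) ℝ :=
  Matrix.of fun i j =>
    if i = j then 0 else ∑ e ∈ edgesBetween E i j, 1 / ((e.card : ℝ) - 1)

/-- The signless Laplacian matrix `Q = D + A`. -/
noncomputable def signlessLap {n : ℕ} (E : Finset (Finset (Fin n))) :
    Matrix (Fin n) (Fin n) ℝ :=
  Matrix.diagonal (fun i => (hdeg E i : ℝ)) + adjMat E

/-- Largest eigenvalue of a real matrix. -/
noncomputable def qmax {n : ℕ} (M : Matrix (Fin n) (Fin n) ℝ) : ℝ :=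
  sSup (spectrum ℝ M)

/-- Smallest eigenvalue of a real matrix. -/
noncomputable def qmin {n : ℕ} (M : Matrix (Fin n) (Fin n) ℝ) : ℝ :=
  sInf (spectrum ℝ M)

/-- A hypergraph is `k`-uniform if every hyperedge has exactly `k` vertices. -/
def IsUniform {n : ℕ} (k : ℕ) (E : Finset (Finset (Fin n))) : Prop :=
  ∀ e ∈ E, e.card = k

/-- A hypergraph is connected if any two vertices are joined by a walk. -/
def Conn {n : ℕ} (E : Finset (Finset (Fin n))) : Prop :=
  ∀ i j : Fin n, Relation.ReflTransGen (Adj E) i j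

/-- The strong chromatic number of a hypergraph. -/
noncomputable def strongChromatic {n : ℕ} (E : Finset (Finset (Fin n))) : ℕ :=
  sInf {c : ℕ | ∃ f : Fin n → Fin c, ∀ i j : Fin n, Adj E i j → f i ≠ f j}


section Aux

open Matrix

variable {n : ℕ}

lemma adjMat_isHermitian (E : Finset (Finset (Fin n))) : (adjMat E).IsHermitian := by
  ext i j
  simp only [adjMat, Matrix.conjTranspose_apply, Matrix.of_apply, star_trivial]
  rcases eq_or_ne i j with rfl | h
  · simp
  · rw [if_neg (Ne.symm h), if_neg h]
    congr 1
    unfold edgesBetween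
    apply Finset.filter_congr
    intro e _
    simp [and_comm]

lemma lap_isHermitian (E : Finset (Finset (Fin n))) : (signlessLap E).IsHermitian := by
  apply Matrix.IsHermitian.add _ (adjMat_isHermitian E)
  simp [Matrix.IsHermitian, Matrix.diagonal_conjTranspose]

lemma rayleigh_le {M : Matrix (Fin n) (Fin n) ℝ} (hM : M.IsHermitian) (x : Fin n → ℝ)
    {c : ℝ} (hc : ∀ i, hM.eigenvalues i ≤ c) :
    x ⬝ᵥ (M *ᵥ x) ≤ c * (x ⬝ᵥ x) := by
  set U : Matrix (Fin n) (Fin n) ℝ := (hM.eigenvectorUnitary : Matrix (Fin n) (Fin n) ℝ) with hU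
  have hUU : U * star U = 1 := (Matrix.mem_unitaryGroup_iff).mp hM.eigenvectorUnitary.2
  set y : Fin n → ℝ := x ᵥ* U with hy
  have hsy : star U *ᵥ x = y := by
    ext i
    simp [hy, Matrix.mulVec, Matrix.vecMul, dotProduct, Matrix.star_apply, mul_comm]
  have h1 : x ⬝ᵥ (M *ᵥ x) = ∑ i, hM.eigenvalues i * (y i) ^ 2 := by
    conv_lhs => rw [hM.spectral_theorem, Unitary.conjStarAlgAut_apply]
    rw [← Matrix.mulVec_mulVec, ← Matrix.mulVec_mulVec, hsy, Matrix.dotProduct_mulVec]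
    simp only [← hy, dotProduct, Matrix.mulVec_diagonal, Function.comp_apply]
    apply Finset.sum_congr rfl
    intro i _
    simp only [RCLike.ofReal_real_eq_id, id_eq]
    ring
  have h2 : x ⬝ᵥ x = ∑ i, (y i) ^ 2 := by
    have e1 : x ⬝ᵥ ((U * star U) *ᵥ x) = ∑ i, (y i) ^ 2 := by
      rw [← Matrix.mulVec_mulVec, hsy, Matrix.dotProduct_mulVec, ← hy]
      simp [dotProduct, sq]
    rw [← e1, hUU, Matrix.one_mulVec]
  rw [h1, h2, Finset.mul_sum]
  apply Finset.sum_le_sum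
  intro i _
  exact mul_le_mul_of_nonneg_right (hc i) (sq_nonneg _)

lemma eig_le_qmax {M : Matrix (Fin n) (Fin n) ℝ} (hM : M.IsHermitian) (i : Fin n) :
    hM.eigenvalues i ≤ qmax M := by
  unfold qmax
  rw [hM.spectrum_real_eq_range_eigenvalues]
  exact le_csSup (Set.Finite.bddAbove (Set.finite_range _)) ⟨i, rfl⟩

lemma adj_rowsum (k : ℕ) (hk : 2 ≤ k) (E : Finset (Finset (Fin n))) (hU : IsUniform k E)
    (i : Fin n) : ∑ j, adjMat E i j = (hdeg E i : ℝ) := by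
  have hk2 : (2 : ℝ) ≤ (k : ℝ) := by exact_mod_cast hk
  have hk1 : ((k : ℝ) - 1) ≠ 0 := by linarith
  have step : ∀ j, adjMat E i j
      = ∑ e ∈ E, if i ∈ e ∧ j ∈ e ∧ j ≠ i then 1 / ((k : ℝ) - 1) else 0 := by
    intro j
    rcases eq_or_ne i j with rfl | h
    · simp [adjMat]
    · simp only [adjMat, Matrix.of_apply, if_neg h]
      rw [edgesBetween, Finset.sum_filter]
      apply Finset.sum_congr rfl
      intro e he
      rw [hU e he]
      by_cases hm : i ∈ e ∧ j ∈ e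
      · simp [hm, Ne.symm h]
      · rw [if_neg hm, if_neg (by tauto)]
  rw [Finset.sum_congr rfl (fun j _ => step j), Finset.sum_comm]
  have inner : ∀ e ∈ E,
      (∑ j, if i ∈ e ∧ j ∈ e ∧ j ≠ i then 1 / ((k : ℝ) - 1) else 0)
        = if i ∈ e then (1 : ℝ) else 0 := by
    intro e he
    by_cases hi : i ∈ e
    · rw [if_pos hi, ← Finset.sum_filter]
      have hfil : (Finset.univ.filter fun j => i ∈ e ∧ j ∈ e ∧ j ≠ i) = e.erase i := by
        ext j
        simp [hi, Finset.mem_erase, and_comm]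
      rw [hfil, Finset.sum_const, Finset.card_erase_of_mem hi, hU e he, nsmul_eq_mul]
      rw [Nat.cast_sub (by omega), Nat.cast_one, mul_one_div, div_self hk1]
    · simp [hi]
  rw [Finset.sum_congr rfl inner, ← Finset.sum_filter, Finset.sum_const, nsmul_eq_mul, mul_one]
  rfl

lemma sum_hdeg (k : ℕ) (E : Finset (Finset (Fin n))) (hU : IsUniform k E) :
    ∑ i, (hdeg E i : ℝ) = (k : ℝ) * E.card := by
  have : ∀ i : Fin n, (hdeg E i : ℝ) = ∑ e ∈ E, if i ∈ e then (1 : ℝ) else 0 := by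
    intro i
    rw [← Finset.sum_filter, Finset.sum_const, nsmul_eq_mul, mul_one]
    rfl
  rw [Finset.sum_congr rfl (fun i _ => this i), Finset.sum_comm]
  have inner : ∀ e ∈ E, (∑ i : Fin n, if i ∈ e then (1 : ℝ) else 0) = (k : ℝ) := by
    intro e he
    rw [← Finset.sum_filter, Finset.sum_const, nsmul_eq_mul, mul_one]
    congr 1
    rw [← hU e he]
    congr 1
    ext j
    simp
  rw [Finset.sum_congr rfl inner, Finset.sum_const, nsmul_eq_mul, mul_comm]

lemma chrom_ge_two (hn : 2 ≤ n) (E : Finset (Finset (Fin n))) (hc : Conn E) :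
    2 ≤ strongChromatic E := by
  have hadj : ∃ a b : Fin n, Adj E a b := by
    have h01 : (⟨0, by omega⟩ : Fin n) ≠ ⟨1, by omega⟩ := by simp [Fin.ext_iff]
    rcases (hc ⟨0, by omega⟩ ⟨1, by omega⟩).cases_head with h | ⟨c, hac, _⟩
    · exact absurd h h01
    · exact ⟨_, _, hac⟩
  apply le_csInf
  · refine ⟨n, fun i => ⟨i, i.2⟩, fun i j hij hf => hij.1 ?_⟩
    have := congrArg Fin.val hf
    simpa [Fin.ext_iff] using this
  · rintro c ⟨f, hf⟩
    by_contra hcon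
    push_neg at hcon
    interval_cases c
    · exact (f ⟨0, by omega⟩).elim0
    · obtain ⟨a, b, hab⟩ := hadj
      exact hf a b hab (Subsingleton.elim _ _)

end Aux

open Matrix in
theorem stmt_4 (n k : ℕ) (hn : 2 ≤ n) (hk : 2 ≤ k) (E : Finset (Finset (Fin n)))
    (hU : IsUniform k E) (hc : Conn E) :
    qmax (signlessLap E) ≥
      ((k : ℝ) * E.card / n) * (1 + 1 / ((strongChromatic E : ℝ) - 1)) := by
  have hQ := lap_isHermitian E
  have hn0 : (0 : ℝ) < n := by positivity
  set ones : Fin n → ℝ := fun _ => 1 with hones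
  have hray := rayleigh_le hQ ones (fun i => eig_le_qmax hQ i)
  have hsum : ones ⬝ᵥ (signlessLap E *ᵥ ones)
      = 2 * ((k : ℝ) * E.card) := by
    simp only [hones, dotProduct, Matrix.mulVec, one_mul, mul_one]
    have : ∀ i : Fin n, ∑ j, signlessLap E i j = 2 * (hdeg E i : ℝ) := by
      intro i
      simp only [signlessLap, Matrix.add_apply]
      rw [Finset.sum_add_distrib, adj_rowsum k hk E hU i]
      have : ∑ j, Matrix.diagonal (fun i => (hdeg E i : ℝ)) i j = (hdeg E i : ℝ) := by
        simp [Matrix.diagonal_apply, Finset.sum_ite_eq]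
      rw [this]; ring
    rw [Finset.sum_congr rfl (fun i _ => this i), ← Finset.mul_sum, sum_hdeg k E hU]
  have hdot : ones ⬝ᵥ ones = (n : ℝ) := by
    simp [hones, dotProduct]
  rw [hsum, hdot] at hray
  have hqm : 2 * ((k : ℝ) * E.card) / n ≤ qmax (signlessLap E) := by
    rw [div_le_iff₀ hn0]
    linarith [hray]
  have hχ : 2 ≤ strongChromatic E := chrom_ge_two hn E hc
  have hχ2 : (2 : ℝ) ≤ (strongChromatic E : ℝ) := by exact_mod_cast hχ
  have h1 : 1 / ((strongChromatic E : ℝ) - 1) ≤ 1 := by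
    rw [div_le_one (by linarith)]; linarith
  have hkm : (0 : ℝ) ≤ (k : ℝ) * E.card / n := by positivity
  have : ((k : ℝ) * E.card / n) * (1 + 1 / ((strongChromatic E : ℝ) - 1))
      ≤ ((k : ℝ) * E.card / n) * 2 := by
    apply mul_le_mul_of_nonneg_left (by linarith) hkm
  calc ((k : ℝ) * E.card / n) * (1 + 1 / ((strongChromatic E : ℝ) - 1))
      ≤ ((k : ℝ) * E.card / n) * 2 := this
    _ = 2 * ((k : ℝ) * E.card) / n := by ring
    _ ≤ qmax (signlessLap E) := hqm
end

section
/- Let H be a k-uniform hypergraph with signless Laplacian Q(H). Then min over vertices u of sqrt(2d_u² + (2/(k-1))·Σ_{v∼u} d_uv·d_v) ≤ q_max(H) ≤ max over vertices u of sqrt(2d_u² + (2/(k-1))·Σ_{v∼u} d_uv·d_v). -/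
open Finset

section Aux

open Matrix

variable {n k : ℕ} {E : Finset (Finset (Fin n))}

lemma edgesBetween_comm (i j : Fin n) : edgesBetween E i j = edgesBetween E j i := by
  simp [edgesBetween, and_comm]

lemma signlessLap_diag (i : Fin n) : signlessLap E i i = (hdeg E i : ℝ) := by
  simp [signlessLap, adjMat, Matrix.diagonal]

lemma signlessLap_offdiag {i j : Fin n} (h : i ≠ j) :
    signlessLap E i j = ∑ e ∈ edgesBetween E i j, 1 / ((e.card : ℝ) - 1) := by
  simp [signlessLap, adjMat, Matrix.diagonal, h]

lemma signlessLap_offdiag' (hU : IsUniform k E) {i j : Fin n} (h : i ≠ j) :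
    signlessLap E i j = ((edgesBetween E i j).card : ℝ) / ((k : ℝ) - 1) := by
  rw [signlessLap_offdiag h]
  have : ∀ e ∈ edgesBetween E i j, 1 / ((e.card : ℝ) - 1) = 1 / ((k : ℝ) - 1) := by
    intro e he
    have : e ∈ E := Finset.mem_filter.mp he |>.1
    rw [hU e this]
  rw [Finset.sum_congr rfl this, Finset.sum_const, nsmul_eq_mul]
  ring

lemma signlessLap_isHermitian : (signlessLap E).IsHermitian := by
  unfold Matrix.IsHermitian
  ext i j
  simp only [Matrix.conjTranspose_apply, star_trivial]
  by_cases h : i = j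
  · subst h; rfl
  · rw [signlessLap_offdiag h, signlessLap_offdiag (Ne.symm h), edgesBetween_comm]

lemma hk1pos {k : ℕ} (hk : 2 ≤ k) : (0:ℝ) < (k : ℝ) - 1 := by
  have : (2:ℝ) ≤ (k:ℝ) := by exact_mod_cast hk
  linarith

lemma signlessLap_nonneg (hU : IsUniform k E) (hk : 2 ≤ k) (i j : Fin n) :
    0 ≤ signlessLap E i j := by
  by_cases h : i = j
  · subst h; rw [signlessLap_diag]; positivity
  · rw [signlessLap_offdiag' hU h]
    have := hk1pos hk
    positivity

lemma sum_card_edgesBetween (hU : IsUniform k E) (u : Fin n) :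
    ∑ j ∈ Finset.univ.erase u, (edgesBetween E u j).card = (k - 1) * hdeg E u := by
  calc ∑ j ∈ Finset.univ.erase u, (edgesBetween E u j).card
      = ∑ j ∈ Finset.univ.erase u, ∑ e ∈ E, if u ∈ e ∧ j ∈ e then 1 else 0 := by
        refine Finset.sum_congr rfl fun j _ => ?_
        rw [edgesBetween, Finset.card_filter]
    _ = ∑ e ∈ E, ∑ j ∈ Finset.univ.erase u, if u ∈ e ∧ j ∈ e then 1 else 0 :=
        Finset.sum_comm
    _ = ∑ e ∈ E, if u ∈ e then k - 1 else 0 := by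
        refine Finset.sum_congr rfl fun e he => ?_
        by_cases hu : u ∈ e
        · simp only [hu, true_and, if_true]
          have h1 : (Finset.univ.erase u).filter (· ∈ e) = e.erase u := by
            ext j; simp [Finset.mem_erase, and_comm]
          calc (∑ j ∈ Finset.univ.erase u, if j ∈ e then (1:ℕ) else 0)
              = ((Finset.univ.erase u).filter (· ∈ e)).card := by
                rw [Finset.card_filter]
            _ = (e.erase u).card := by rw [h1]
            _ = k - 1 := by rw [Finset.card_erase_of_mem hu, hU e he]
        · simp [hu]
    _ = (k - 1) * hdeg E u := by
        rw [← Finset.sum_filter]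
        simp [hdeg, Finset.sum_const, mul_comm]

lemma signlessLap_offrow_sum (hU : IsUniform k E) (hk : 2 ≤ k) (u : Fin n) :
    ∑ j ∈ Finset.univ.erase u, signlessLap E u j = (hdeg E u : ℝ) := by
  have h1 : ∀ j ∈ Finset.univ.erase u,
      signlessLap E u j = ((edgesBetween E u j).card : ℝ) / ((k : ℝ) - 1) := by
    intro j hj
    exact signlessLap_offdiag' hU (Finset.ne_of_mem_erase hj).symm
  rw [Finset.sum_congr rfl h1, ← Finset.sum_div, ← Nat.cast_sum,
    sum_card_edgesBetween hU u]
  have hkpos := hk1pos hk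
  have h2 : (((k-1) * hdeg E u : ℕ) : ℝ) = ((k:ℝ) - 1) * (hdeg E u : ℝ) := by
    push_cast [Nat.cast_sub (le_trans one_le_two hk)]
    ring
  rw [h2]
  field_simp

lemma signlessLap_row_sum (hU : IsUniform k E) (hk : 2 ≤ k) (u : Fin n) :
    ∑ j, signlessLap E u j = 2 * (hdeg E u : ℝ) := by
  rw [← Finset.add_sum_erase _ _ (Finset.mem_univ u), signlessLap_diag,
    signlessLap_offrow_sum hU hk u]
  ring

lemma signlessLap_mulVec_one (hU : IsUniform k E) (hk : 2 ≤ k) :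
    signlessLap E *ᵥ (fun _ : Fin n => (1:ℝ)) = fun u => 2 * (hdeg E u : ℝ) := by
  funext u
  simp only [Matrix.mulVec, dotProduct, mul_one]
  exact signlessLap_row_sum hU hk u

lemma mem_neighbors {u j : Fin n} : j ∈ neighbors E u ↔ Adj E u j := by
  rw [show neighbors E u = @Finset.filter _ (fun j => Adj E u j) (Classical.decPred _) Finset.univ from rfl,
    @Finset.mem_filter _ _ (Classical.decPred _)]
  simp

lemma neighbors_subset_erase (u : Fin n) : neighbors E u ⊆ Finset.univ.erase u := by
  intro j hj
  have : Adj E u j := mem_neighbors.mp hj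
  exact Finset.mem_erase.mpr ⟨(this.1).symm, Finset.mem_univ j⟩

lemma signlessLap_sq_row_sum (hU : IsUniform k E) (hk : 2 ≤ k) (u : Fin n) :
    ∑ j, (signlessLap E * signlessLap E) u j =
      2 * (hdeg E u : ℝ) ^ 2 + 2 / ((k : ℝ) - 1) *
        ∑ v ∈ neighbors E u, ((edgesBetween E u v).card : ℝ) * (hdeg E v : ℝ) := by
  have hkpos := hk1pos hk
  have h0 : ∑ j, (signlessLap E * signlessLap E) u j
      = ∑ l, signlessLap E u l * (2 * (hdeg E l : ℝ)) := by
    simp only [Matrix.mul_apply]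
    rw [Finset.sum_comm]
    refine Finset.sum_congr rfl fun l _ => ?_
    rw [← Finset.mul_sum, signlessLap_row_sum hU hk l]
  rw [h0, ← Finset.add_sum_erase _ _ (Finset.mem_univ u), signlessLap_diag]
  have h2 : ∑ l ∈ Finset.univ.erase u, signlessLap E u l * (2 * (hdeg E l : ℝ))
      = ∑ l ∈ neighbors E u, signlessLap E u l * (2 * (hdeg E l : ℝ)) := by
    refine (Finset.sum_subset (neighbors_subset_erase u) ?_).symm
    intro l hl hln
    have hlu : u ≠ l := (Finset.ne_of_mem_erase hl).symm
    have hemp : edgesBetween E u l = ∅ := by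
      by_contra hne
      obtain ⟨e, he⟩ := Finset.nonempty_iff_ne_empty.mpr hne
      obtain ⟨heE, hue, hle⟩ := Finset.mem_filter.mp he |>.imp id (fun h => h)
      exact hln (mem_neighbors.mpr ⟨hlu, e, heE, hue, hle⟩)
    rw [signlessLap_offdiag' hU hlu, hemp]
    simp
  rw [h2]
  have h3 : ∀ l ∈ neighbors E u, signlessLap E u l * (2 * (hdeg E l : ℝ))
      = 2 / ((k:ℝ)-1) * (((edgesBetween E u l).card : ℝ) * (hdeg E l : ℝ)) := by
    intro l hl
    have : Adj E u l := mem_neighbors.mp hl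
    rw [signlessLap_offdiag' hU this.1]
    field_simp
  rw [Finset.sum_congr rfl h3, ← Finset.mul_sum]
  ring

lemma eig_mem_ball {m : ℕ} {M : Matrix (Fin m) (Fin m) ℝ} {μ : ℝ} {x : Fin m → ℝ}
    (hx : x ≠ 0) (hMx : M *ᵥ x = μ • x) :
    ∃ u, |μ - M u u| ≤ ∑ j ∈ Finset.univ.erase u, |M u j| := by
  have hev : Module.End.HasEigenvalue (Matrix.toLin' M) μ :=
    Module.End.hasEigenvalue_of_hasEigenvector
      ⟨Module.End.mem_eigenspace_iff.mpr (by rw [Matrix.toLin'_apply, hMx]), hx⟩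
  obtain ⟨u, hu⟩ := eigenvalue_mem_ball hev
  refine ⟨u, ?_⟩
  rw [Metric.mem_closedBall, Real.dist_eq] at hu
  simpa [Real.norm_eq_abs] using hu

lemma unitary_dot {m : ℕ} {U : Matrix (Fin m) (Fin m) ℝ} (h : Uᵀ * U = 1)
    (a b : Fin m → ℝ) : (U *ᵥ a) ⬝ᵥ (U *ᵥ b) = a ⬝ᵥ b := by
  rw [Matrix.dotProduct_mulVec, ← Matrix.vecMul_transpose, Matrix.vecMul_vecMul, h,
    Matrix.vecMul_one]

lemma rayleigh_sq {m : ℕ} {M : Matrix (Fin m) (Fin m) ℝ} (hM : M.IsHermitian) {μ : ℝ}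
    (h1 : ∀ i, |hM.eigenvalues i| ≤ μ) (x : Fin m → ℝ) :
    x ⬝ᵥ ((M * M) *ᵥ x) ≤ μ ^ 2 * (x ⬝ᵥ x) := by
  classical
  set U : Matrix (Fin m) (Fin m) ℝ := (hM.eigenvectorUnitary : Matrix (Fin m) (Fin m) ℝ)
    with hUdef
  have hUt : star U = Uᵀ := by
    rw [Matrix.star_eq_conjTranspose, Matrix.conjTranspose_eq_transpose_of_trivial]
  have h1' : Uᵀ * U = 1 := by
    rw [← hUt]; exact Unitary.star_mul_self_of_mem hM.eigenvectorUnitary.2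
  have h2' : (Uᵀ)ᵀ * Uᵀ = 1 := by
    rw [Matrix.transpose_transpose, ← hUt]
    exact Unitary.mul_star_self_of_mem hM.eigenvectorUnitary.2
  have hMt : Mᵀ = M := by
    rw [← Matrix.conjTranspose_eq_transpose_of_trivial]; exact hM
  have hdiag : Matrix.diagonal (RCLike.ofReal ∘ hM.eigenvalues) =
      Matrix.diagonal hM.eigenvalues := by
    congr 1
  have hspec := hM.spectral_theorem
  rw [Unitary.conjStarAlgAut_apply, hdiag, hUt] at hspec
  set c : Fin m → ℝ := Uᵀ *ᵥ x with hc
  have hMx : M *ᵥ x = U *ᵥ (Matrix.diagonal hM.eigenvalues *ᵥ c) := by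
    conv_lhs => rw [hspec]
    rw [← Matrix.mulVec_mulVec, ← Matrix.mulVec_mulVec]
  have key : x ⬝ᵥ ((M * M) *ᵥ x) = (M *ᵥ x) ⬝ᵥ (M *ᵥ x) := by
    rw [← Matrix.mulVec_mulVec, Matrix.dotProduct_mulVec, ← Matrix.mulVec_transpose, hMt]
  have hcx : c ⬝ᵥ c = x ⬝ᵥ x := by rw [hc]; exact unitary_dot h2' x x
  rw [key, hMx, unitary_dot h1', ← hcx]
  simp only [dotProduct, Matrix.mulVec_diagonal]
  rw [Finset.mul_sum]
  refine Finset.sum_le_sum fun i _ => ?_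
  have hsq : hM.eigenvalues i ^ 2 ≤ μ ^ 2 := by
    have := h1 i
    nlinarith [abs_nonneg (hM.eigenvalues i), sq_abs (hM.eigenvalues i)]
  nlinarith [mul_self_nonneg (c i), mul_le_mul_of_nonneg_right hsq (mul_self_nonneg (c i))]

end Aux

open Matrix in
theorem stmt_7 (n k : ℕ) (hn : 0 < n) (hk : 2 ≤ k) (E : Finset (Finset (Fin n)))
    (hU : IsUniform k E) (hc : Conn E) :
    (⨅ u : Fin n, Real.sqrt (2 * (hdeg E u : ℝ) ^ 2 +
        2 / ((k : ℝ) - 1) *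
          ∑ v ∈ neighbors E u, ((edgesBetween E u v).card : ℝ) * (hdeg E v : ℝ)))
      ≤ qmax (signlessLap E) ∧
    qmax (signlessLap E) ≤
      ⨆ u : Fin n, Real.sqrt (2 * (hdeg E u : ℝ) ^ 2 +
        2 / ((k : ℝ) - 1) *
          ∑ v ∈ neighbors E u, ((edgesBetween E u v).card : ℝ) * (hdeg E v : ℝ)) := by
  classical
  have hne : Nonempty (Fin n) := ⟨⟨0, hn⟩⟩
  have hQ : (signlessLap E).IsHermitian := signlessLap_isHermitian
  have hkpos := hk1pos hk
  have hQnn : ∀ i j, 0 ≤ signlessLap E i j := signlessLap_nonneg hU hk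
  have hQQnn : ∀ i j, 0 ≤ (signlessLap E * signlessLap E) i j := by
    intro i j
    rw [Matrix.mul_apply]
    exact Finset.sum_nonneg fun l _ => mul_nonneg (hQnn i l) (hQnn l j)
  have hspec : spectrum ℝ (signlessLap E) = Set.range hQ.eigenvalues :=
    hQ.spectrum_real_eq_range_eigenvalues
  have hvec : ∀ i, signlessLap E *ᵥ ⇑(hQ.eigenvectorBasis i) =
      hQ.eigenvalues i • ⇑(hQ.eigenvectorBasis i) := hQ.mulVec_eigenvectorBasis
  have hvne : ∀ i, (⇑(hQ.eigenvectorBasis i) : Fin n → ℝ) ≠ 0 := by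
    intro i h
    exact hQ.eigenvectorBasis.orthonormal.ne_zero i (by ext j; exact congrFun h j)
  -- all eigenvalues are nonnegative
  have hev0 : ∀ i, 0 ≤ hQ.eigenvalues i := by
    intro i
    obtain ⟨u, hu⟩ := eig_mem_ball (hvne i) (hvec i)
    have hoff : ∑ j ∈ Finset.univ.erase u, |signlessLap E u j| = (hdeg E u : ℝ) := by
      rw [← signlessLap_offrow_sum hU hk u]
      exact Finset.sum_congr rfl fun j _ => abs_of_nonneg (hQnn u j)
    rw [hoff, signlessLap_diag] at hu
    have := abs_le.mp hu
    linarith [this.1]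
  -- each eigenvalue squared is at most some row sum of Q²
  have hub : ∀ i, ∃ u, hQ.eigenvalues i ^ 2 ≤
      ∑ j, (signlessLap E * signlessLap E) u j := by
    intro i
    have hsq : (signlessLap E * signlessLap E) *ᵥ ⇑(hQ.eigenvectorBasis i) =
        hQ.eigenvalues i ^ 2 • ⇑(hQ.eigenvectorBasis i) := by
      rw [← Matrix.mulVec_mulVec, hvec i, Matrix.mulVec_smul, hvec i, smul_smul, sq]
    obtain ⟨u, hu⟩ := eig_mem_ball (hvne i) hsq
    have hoff : ∑ j ∈ Finset.univ.erase u, |(signlessLap E * signlessLap E) u j| =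
        ∑ j ∈ Finset.univ.erase u, (signlessLap E * signlessLap E) u j :=
      Finset.sum_congr rfl fun j _ => abs_of_nonneg (hQQnn u j)
    rw [hoff] at hu
    refine ⟨u, ?_⟩
    rw [← Finset.add_sum_erase _ _ (Finset.mem_univ u)]
    have := (abs_le.mp hu).2
    linarith
  have hbdd : BddAbove (Set.range hQ.eigenvalues) := (Set.finite_range _).bddAbove
  have hqmem : qmax (signlessLap E) ∈ Set.range hQ.eigenvalues := by
    rw [qmax, hspec]
    exact (Set.range_nonempty _).csSup_mem (Set.finite_range _)
  obtain ⟨i0, hi0⟩ := hqmem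
  have hq0 : 0 ≤ qmax (signlessLap E) := hi0 ▸ hev0 i0
  have hle : ∀ i, hQ.eigenvalues i ≤ qmax (signlessLap E) := by
    intro i
    rw [qmax, hspec]
    exact le_csSup hbdd ⟨i, rfl⟩
  constructor
  · -- lower bound
    obtain ⟨u0, -, hu0⟩ := Finset.exists_min_image Finset.univ
      (fun u => ∑ j, (signlessLap E * signlessLap E) u j)
      ⟨Classical.arbitrary (Fin n), Finset.mem_univ _⟩
    have habs : ∀ i, |hQ.eigenvalues i| ≤ qmax (signlessLap E) := fun i => by
      rw [abs_of_nonneg (hev0 i)]; exact hle i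
    have hray := rayleigh_sq hQ habs (fun _ : Fin n => (1:ℝ))
    have hdot1 : ((fun _ : Fin n => (1:ℝ)) ⬝ᵥ ((signlessLap E * signlessLap E) *ᵥ fun _ => (1:ℝ)))
        = ∑ u, ∑ j, (signlessLap E * signlessLap E) u j := by
      simp [dotProduct, Matrix.mulVec]
    have hdot2 : ((fun _ : Fin n => (1:ℝ)) ⬝ᵥ (fun _ : Fin n => (1:ℝ))) = (n : ℝ) := by
      simp [dotProduct]
    rw [hdot1, hdot2] at hray
    have hnsum : (n : ℝ) * (∑ j, (signlessLap E * signlessLap E) u0 j) ≤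
        (n : ℝ) * qmax (signlessLap E) ^ 2 := by
      calc (n : ℝ) * (∑ j, (signlessLap E * signlessLap E) u0 j)
          = ∑ _u : Fin n, ∑ j, (signlessLap E * signlessLap E) u0 j := by
            rw [Finset.sum_const, Finset.card_univ, Fintype.card_fin, nsmul_eq_mul]
        _ ≤ ∑ u, ∑ j, (signlessLap E * signlessLap E) u j :=
            Finset.sum_le_sum fun u _ => hu0 u (Finset.mem_univ u)
        _ ≤ qmax (signlessLap E) ^ 2 * (n : ℝ) := hray
        _ = (n : ℝ) * qmax (signlessLap E) ^ 2 := by ring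
    have hnpos : (0:ℝ) < (n : ℝ) := by exact_mod_cast hn
    have hR0 : ∑ j, (signlessLap E * signlessLap E) u0 j ≤ qmax (signlessLap E) ^ 2 :=
      le_of_mul_le_mul_left hnsum hnpos
    have hsqrt : Real.sqrt (∑ j, (signlessLap E * signlessLap E) u0 j) ≤
        qmax (signlessLap E) := by
      calc Real.sqrt (∑ j, (signlessLap E * signlessLap E) u0 j)
          ≤ Real.sqrt (qmax (signlessLap E) ^ 2) := Real.sqrt_le_sqrt hR0
        _ = qmax (signlessLap E) := Real.sqrt_sq hq0
    rw [signlessLap_sq_row_sum hU hk u0] at hsqrt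
    refine ciInf_le_of_le ⟨0, ?_⟩ u0 hsqrt
    rintro y ⟨u, rfl⟩
    exact Real.sqrt_nonneg _
  · -- upper bound
    rw [qmax, hspec]
    refine csSup_le (Set.range_nonempty _) ?_
    rintro _ ⟨i, rfl⟩
    obtain ⟨u, hu⟩ := hub i
    have h2 : hQ.eigenvalues i ≤ Real.sqrt (∑ j, (signlessLap E * signlessLap E) u j) :=
      (Real.le_sqrt (hev0 i) (le_trans (sq_nonneg _) hu)).mpr hu
    rw [signlessLap_sq_row_sum hU hk u] at h2
    exact h2.trans (le_ciSup (f := fun u : Fin n => Real.sqrt (2 * (hdeg E u : ℝ) ^ 2 +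
      2 / ((k : ℝ) - 1) *
        ∑ v ∈ neighbors E u, ((edgesBetween E u v).card : ℝ) * (hdeg E v : ℝ)))
      (Set.Finite.bddAbove (Set.finite_range _)) u)
end
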